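/- Let n ∈ ℕ, 1 < p < ∞, q = p/(p−1), and ε₁,…,ε_n ≥ 0. If 1 − Σ_{k=1}^{n} ε_k/(t_k s_k) ≥ 0 set m = n; otherwise choose m ∈ {0,1,…,n} such that 1 − Σ_{k=1}^{m} ε_k/(t_k s_k) ≥ 0 and 1 − Σ_{k=1}^{m} ε_k/(t_k s_k) − ε_{m+1}/(t_{m+1} s_{m+1}) < 0. Then E(A, W^{T,S}_{p,q}, J^n_{ε̄}) = E(A, W^{T,S}_{p,q}, J^n_{ε̄}, Ψ*_m) = t_{m+1} s_{m+1} + Σ_{k=1}^{m} ε_k (1 − t_{m+1} s_{m+1}/(t_k s_k)). -/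

import Mathlib

open scoped ENNReal NNReal BigOperators

/-- The `ℓ_q` (quasi-)norm `(∑ |x_k|^q)^{1/q}` of a complex sequence, valued in `ℝ≥0∞`. -/
noncomputable def lqNorm (q : ℝ) (x : ℕ → ℂ) : ℝ≥0∞ :=
  (∑' k, (‖x k‖₊ : ℝ≥0∞) ^ q) ^ (1 / q)

/-- The class `W^T_q = {Th : h ∈ ℓ_q, ‖h‖_q ≤ 1}`, where `T` is the diagonal operator
determined by the sequence `t` (0-based indexing: `t k` is the paper's `t_{k+1}`). -/
def WT (q : ℝ) (t : ℕ → ℝ) : Set (ℕ → ℂ) :=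
  {x | ∃ h : ℕ → ℂ, (∀ k, x k = (t k : ℂ) * h k) ∧ lqNorm q h ≤ 1}

/-- The scalar product `A(x,y) = ⟨x,y⟩ = ∑_{k=1}^∞ x_k y_k`. -/
noncomputable def scalarProd (x y : ℕ → ℂ) : ℂ := ∑' k, x k * y k

/-- The error `E(A, W₁ × W₂, J, Ψ) = sup_{(x,y)} sup_{(a,b) ∈ J(x,y)} |⟨x,y⟩ − Ψ(a,b)|`
of a recovery method `Ψ` for the scalar product. -/
noncomputable def recErrSP {Z : Type*} (W₁ W₂ : Set (ℕ → ℂ))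
    (J : (ℕ → ℂ) → (ℕ → ℂ) → Set Z) (Ψ : Z → ℂ) : ℝ≥0∞ :=
  ⨆ x ∈ W₁, ⨆ y ∈ W₂, ⨆ ab ∈ J x y, (‖scalarProd x y - Ψ ab‖₊ : ℝ≥0∞)

/-- The error of optimal recovery `E(A, W₁ × W₂, J) = inf_Ψ E(A, W₁ × W₂, J, Ψ)`. -/
noncomputable def optErrSP {Z : Type*} (W₁ W₂ : Set (ℕ → ℂ))
    (J : (ℕ → ℂ) → (ℕ → ℂ) → Set Z) : ℝ≥0∞ :=
  ⨅ Ψ : Z → ℂ, recErrSP W₁ W₂ J Ψ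

/-- The method `Ψ*_m(a,b) = ∑_{k=1}^m a_k b_k (1 − t_{m+1}s_{m+1}/(t_k s_k))`
(0-based: `t m * s m` is the paper's `t_{m+1}s_{m+1}`); `PsiStar t s n 0 = Ψ*_0 = 0`. -/
noncomputable def PsiStar (t s : ℕ → ℝ) (n m : ℕ)
    (ab : (Fin n → ℂ) × (Fin n → ℂ)) : ℂ :=
  ∑ k : Fin n, if (k : ℕ) < m then
    ab.1 k * ab.2 k * ((1 - t m * s m / (t (k : ℕ) * s (k : ℕ)) : ℝ) : ℂ) else 0

/-- The information mapping
`J^n_{ε̄}(x,y) = {(a,b) ∈ ℂⁿ × ℂⁿ : |x_k y_k − a_k b_k| ≤ ε_k, k = 1,…,n}`. -/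
def infoProdCoord (n : ℕ) (ε : ℕ → ℝ) (x y : ℕ → ℂ) : Set ((Fin n → ℂ) × (Fin n → ℂ)) :=
  {ab | ∀ k : Fin n, ‖x (k : ℕ) * y (k : ℕ) - ab.1 k * ab.2 k‖ ≤ ε (k : ℕ)}

lemma lq_facts {r : ℝ} (hr : 0 < r) {h : ℕ → ℂ} (hh : lqNorm r h ≤ 1) :
    Summable (fun k => ‖h k‖ ^ r) ∧ ∑' k, ‖h k‖ ^ r ≤ 1 := by
  have hX : (∑' k, (‖h k‖₊ : ℝ≥0∞) ^ r) ≤ 1 := by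
    have h2 := ENNReal.rpow_le_rpow hh hr.le
    rw [ENNReal.one_rpow, lqNorm, ← ENNReal.rpow_mul, one_div, inv_mul_cancel₀ hr.ne',
      ENNReal.rpow_one] at h2
    exact h2
  simp only [fun k : ℕ => (ENNReal.coe_rpow_of_nonneg (‖h k‖₊) hr.le).symm] at hX
  have hs : Summable (fun k => ‖h k‖₊ ^ r) :=
    ENNReal.tsum_coe_ne_top_iff_summable.1 (ne_top_of_le_ne_top ENNReal.one_ne_top hX)
  have ht : ∑' k, (‖h k‖₊ ^ r) ≤ (1 : ℝ≥0) := by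
    rw [← ENNReal.coe_le_coe, ENNReal.coe_tsum hs]; simpa using hX
  have hrw : (fun k => ‖h k‖ ^ r) = fun k => ((‖h k‖₊ ^ r : ℝ≥0) : ℝ) := by
    funext k; rw [NNReal.coe_rpow, coe_nnnorm]
  constructor
  · rw [hrw]; exact NNReal.summable_coe.2 hs
  · rw [hrw, ← NNReal.coe_tsum]; exact_mod_cast ht

lemma upper_aux (n m : ℕ) (hmn : m ≤ n) {p q : ℝ} (hpq : p.HolderConjugate q)
    (t s : ℕ → ℝ) (htpos : ∀ k, 0 < t k) (htmono : Antitone t)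
    (hspos : ∀ k, 0 < s k) (hsmono : Antitone s)
    (ε : ℕ → ℝ)
    {x y : ℕ → ℂ} (hx : x ∈ WT p t) (hy : y ∈ WT q s)
    {ab : (Fin n → ℂ) × (Fin n → ℂ)} (hab : ab ∈ infoProdCoord n ε x y) :
    ‖scalarProd x y - PsiStar t s n m ab‖ ≤
      t m * s m + ∑ k ∈ Finset.range m, ε k * (1 - t m * s m / (t k * s k)) := by
  obtain ⟨h, hxh, hhn⟩ := hx
  obtain ⟨g, hyg, hgn⟩ := hy
  set c := t m * s m with hc_def
  have hc : 0 < c := mul_pos (htpos m) (hspos m)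
  have hts : ∀ k, 0 < t k * s k := fun k => mul_pos (htpos k) (hspos k)
  obtain ⟨hsum_h, hth⟩ := lq_facts hpq.pos hhn
  obtain ⟨hsum_g, htg⟩ := lq_facts hpq.symm.pos hgn
  -- Hölder
  obtain ⟨hsum_hg, hhg⟩ := Real.summable_and_inner_le_Lp_mul_Lq_tsum_of_nonneg hpq
    (fun k => norm_nonneg (h k)) (fun k => norm_nonneg (g k)) hsum_h hsum_g
  have hhg1 : ∑' k, ‖h k‖ * ‖g k‖ ≤ 1 := by
    refine hhg.trans ?_
    have h1 : (∑' k, ‖h k‖ ^ p) ^ (1/p) ≤ 1 :=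
      Real.rpow_le_one (tsum_nonneg fun k => Real.rpow_nonneg (norm_nonneg _) _) hth
        (one_div_nonneg.2 hpq.pos.le)
    have h2 : (∑' k, ‖g k‖ ^ q) ^ (1/q) ≤ 1 :=
      Real.rpow_le_one (tsum_nonneg fun k => Real.rpow_nonneg (norm_nonneg _) _) htg
        (one_div_nonneg.2 hpq.symm.pos.le)
    calc _ ≤ 1 * (∑' k, ‖g k‖ ^ q) ^ (1/q) := by
            refine mul_le_mul_of_nonneg_right h1 (Real.rpow_nonneg ?_ _)
            exact tsum_nonneg fun k => Real.rpow_nonneg (norm_nonneg _) _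
      _ ≤ 1 * 1 := by refine mul_le_mul_of_nonneg_left h2 zero_le_one
      _ = 1 := mul_one 1
  set u : ℕ → ℂ := fun k => x k * y k with hu_def
  have hnrm : ∀ k, ‖u k‖ = (t k * s k) * (‖h k‖ * ‖g k‖) := by
    intro k
    rw [hu_def]; simp only [hxh k, hyg k]
    rw [show (t k : ℂ) * h k * ((s k : ℂ) * g k) = ((t k * s k : ℝ) : ℂ) * (h k * g k) by
      push_cast; ring]
    rw [norm_mul, norm_mul, Complex.norm_real, Real.norm_eq_abs,
      abs_of_pos (hts k)]
  have hsum_un : Summable (fun k => ‖u k‖) := by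
    refine Summable.of_nonneg_of_le (fun k => norm_nonneg _) (fun k => ?_)
      (hsum_hg.mul_left (t 0 * s 0))
    rw [hnrm k]
    refine mul_le_mul_of_nonneg_right ?_ (by positivity)
    exact mul_le_mul (htmono (Nat.zero_le k)) (hsmono (Nat.zero_le k)) (hspos k).le
      (htpos 0).le
  have hsum_u : Summable u := Summable.of_norm hsum_un
  -- decompose scalarProd
  have hdecomp : scalarProd x y = (∑ k ∈ Finset.range m, u k) + ∑' k, u (k + m) := by
    rw [scalarProd, ← hsum_u.sum_add_tsum_nat_add m]
  -- rewrite PsiStar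
  set B : ℕ → ℂ := fun k => if hk : k < n then ab.1 ⟨k, hk⟩ * ab.2 ⟨k, hk⟩ else 0 with hB_def
  have hPsi : PsiStar t s n m ab =
      ∑ k ∈ Finset.range m, B k * ((1 - c / (t k * s k) : ℝ) : ℂ) := by
    rw [PsiStar]
    calc (∑ k : Fin n, if (k : ℕ) < m then
        ab.1 k * ab.2 k * ((1 - t m * s m / (t (k : ℕ) * s (k : ℕ)) : ℝ) : ℂ) else 0)
        = ∑ k : Fin n, (fun j : ℕ => if j < m then B j * ((1 - c / (t j * s j) : ℝ) : ℂ)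
            else 0) (k : ℕ) := Finset.sum_congr rfl fun k _ => by
              simp only [hB_def, k.isLt, dif_pos, Fin.eta, hc_def]
      _ = ∑ k ∈ Finset.range n,
            (if k < m then B k * ((1 - c / (t k * s k) : ℝ) : ℂ) else 0) :=
          Fin.sum_univ_eq_sum_range
            (fun j : ℕ => if j < m then B j * ((1 - c / (t j * s j) : ℝ) : ℂ) else 0) n
      _ = ∑ k ∈ Finset.range m,
            (if k < m then B k * ((1 - c / (t k * s k) : ℝ) : ℂ) else 0) :=
          (Finset.sum_subset (Finset.range_subset_range.2 hmn) (fun k _ hk =>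
            if_neg (fun hkm => hk (Finset.mem_range.2 hkm)))).symm
      _ = ∑ k ∈ Finset.range m, B k * ((1 - c / (t k * s k) : ℝ) : ℂ) :=
          Finset.sum_congr rfl fun k hk => if_pos (Finset.mem_range.1 hk)
  have hBnorm : ∀ k, k < m → ‖u k - B k‖ ≤ ε k := by
    intro k hk
    have hkn : k < n := lt_of_lt_of_le hk hmn
    have := hab ⟨k, hkn⟩
    simpa [hB_def, dif_pos hkn] using this
  have hcoef : ∀ k, k < m → 0 ≤ 1 - c / (t k * s k) := by
    intro k hk
    rw [sub_nonneg, div_le_one (hts k)]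
    exact mul_le_mul (htmono hk.le) (hsmono hk.le) (hspos m).le (htpos k).le
  -- key pointwise identity
  have hpt : ∀ k, k < m → u k - B k * ((1 - c / (t k * s k) : ℝ) : ℂ) =
      (u k - B k) * ((1 - c / (t k * s k) : ℝ) : ℂ) + ((c / (t k * s k) : ℝ) : ℂ) * u k := by
    intro k hk
    have : ((1 - c / (t k * s k) : ℝ) : ℂ) + ((c / (t k * s k) : ℝ) : ℂ) = 1 := by
      push_cast; ring
    calc u k - B k * ((1 - c / (t k * s k) : ℝ) : ℂ)
        = u k * (((1 - c / (t k * s k) : ℝ) : ℂ) + ((c / (t k * s k) : ℝ) : ℂ))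
          - B k * ((1 - c / (t k * s k) : ℝ) : ℂ) := by rw [this, mul_one]
      _ = _ := by ring
  have hkey : scalarProd x y - PsiStar t s n m ab =
      (∑ k ∈ Finset.range m, (u k - B k) * ((1 - c / (t k * s k) : ℝ) : ℂ)) +
      ((∑ k ∈ Finset.range m, ((c / (t k * s k) : ℝ) : ℂ) * u k) + ∑' k, u (k + m)) := by
    rw [hdecomp, hPsi]
    have e1 : (∑ k ∈ Finset.range m, u k) -
        ∑ k ∈ Finset.range m, B k * ((1 - c / (t k * s k) : ℝ) : ℂ) =
        ∑ k ∈ Finset.range m, ((u k - B k) * ((1 - c / (t k * s k) : ℝ) : ℂ) +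
          ((c / (t k * s k) : ℝ) : ℂ) * u k) := by
      rw [← Finset.sum_sub_distrib]
      exact Finset.sum_congr rfl fun k hk => hpt k (Finset.mem_range.1 hk)
    calc (∑ k ∈ Finset.range m, u k) + (∑' k, u (k + m)) -
          ∑ k ∈ Finset.range m, B k * ((1 - c / (t k * s k) : ℝ) : ℂ)
        = ((∑ k ∈ Finset.range m, u k) -
            ∑ k ∈ Finset.range m, B k * ((1 - c / (t k * s k) : ℝ) : ℂ)) +
            (∑' k, u (k + m)) := by ring
      _ = (∑ k ∈ Finset.range m, ((u k - B k) * ((1 - c / (t k * s k) : ℝ) : ℂ) +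
            ((c / (t k * s k) : ℝ) : ℂ) * u k)) + (∑' k, u (k + m)) := by rw [e1]
      _ = _ := by rw [Finset.sum_add_distrib]; ring
  rw [hkey]
  have hb1 : ‖∑ k ∈ Finset.range m, (u k - B k) * ((1 - c / (t k * s k) : ℝ) : ℂ)‖ ≤
      ∑ k ∈ Finset.range m, ε k * (1 - c / (t k * s k)) := by
    refine (norm_sum_le _ _).trans (Finset.sum_le_sum fun k hk => ?_)
    have hk := Finset.mem_range.1 hk
    rw [norm_mul, Complex.norm_real, Real.norm_eq_abs, abs_of_nonneg (hcoef k hk)]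
    exact mul_le_mul_of_nonneg_right (hBnorm k hk) (hcoef k hk)
  have hb2 : ‖(∑ k ∈ Finset.range m, ((c / (t k * s k) : ℝ) : ℂ) * u k) + ∑' k, u (k + m)‖
      ≤ c := by
    have hsum_shift : Summable (fun k => u (k + m)) := (summable_nat_add_iff m).2 hsum_u
    have hsum_shiftn : Summable (fun k => ‖u (k + m)‖) := (summable_nat_add_iff m).2 hsum_un
    have hterm1 : ∀ k, ‖((c / (t k * s k) : ℝ) : ℂ) * u k‖ = c * (‖h k‖ * ‖g k‖) := by
      intro k
      rw [norm_mul, Complex.norm_real, Real.norm_eq_abs, abs_of_pos (div_pos hc (hts k)),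
        hnrm k]
      have hcc : c / (t k * s k) * (t k * s k) = c := div_mul_cancel₀ c (hts k).ne'
      calc c / (t k * s k) * (t k * s k * (‖h k‖ * ‖g k‖))
          = (c / (t k * s k) * (t k * s k)) * (‖h k‖ * ‖g k‖) := by ring
        _ = c * (‖h k‖ * ‖g k‖) := by rw [hcc]
    have hterm2 : ∀ k, ‖u (k + m)‖ ≤ c * (‖h (k + m)‖ * ‖g (k + m)‖) := by
      intro k
      rw [hnrm]
      refine mul_le_mul_of_nonneg_right ?_ (by positivity)
      exact mul_le_mul (htmono (Nat.le_add_left m k)) (hsmono (Nat.le_add_left m k))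
        (hspos _).le (htpos m).le
    calc ‖(∑ k ∈ Finset.range m, ((c / (t k * s k) : ℝ) : ℂ) * u k) + ∑' k, u (k + m)‖
        ≤ ‖∑ k ∈ Finset.range m, ((c / (t k * s k) : ℝ) : ℂ) * u k‖ + ‖∑' k, u (k + m)‖ :=
          norm_add_le _ _
      _ ≤ (∑ k ∈ Finset.range m, c * (‖h k‖ * ‖g k‖)) +
            ∑' k, c * (‖h (k + m)‖ * ‖g (k + m)‖) := by
          refine add_le_add ?_ ?_
          · refine (norm_sum_le _ _).trans ?_
            refine le_of_eq (Finset.sum_congr rfl fun k _ => hterm1 k)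
          · refine (norm_tsum_le_tsum_norm hsum_shiftn).trans ?_
            exact Summable.tsum_le_tsum hterm2 hsum_shiftn
              (((summable_nat_add_iff m).2 hsum_hg).mul_left c)
      _ = c * ((∑ k ∈ Finset.range m, ‖h k‖ * ‖g k‖) + ∑' k, ‖h (k + m)‖ * ‖g (k + m)‖) := by
          rw [mul_add, Finset.mul_sum, tsum_mul_left]
      _ = c * ∑' k, ‖h k‖ * ‖g k‖ := by rw [hsum_hg.sum_add_tsum_nat_add m]
      _ ≤ c * 1 := mul_le_mul_of_nonneg_left hhg1 hc.le
      _ = c := mul_one c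
  calc ‖_ + _‖ ≤ _ := norm_add_le _ _
    _ ≤ (∑ k ∈ Finset.range m, ε k * (1 - c / (t k * s k))) + c := add_le_add hb1 hb2
    _ = _ := add_comm _ _

lemma lq_of_finite (e : ℝ) (he : 0 < e) (r : ℕ → ℝ) (hr0 : ∀ k, 0 ≤ r k) (M : ℕ)
    (hrz : ∀ k, M ≤ k → r k = 0) (hsum : ∑ k ∈ Finset.range M, r k = 1) :
    lqNorm e (fun k => ((r k ^ (1/e) : ℝ) : ℂ)) ≤ 1 := by
  have hterm : ∀ k : ℕ, ((‖((r k ^ (1/e) : ℝ) : ℂ)‖₊ : ℝ≥0∞)) ^ e = ENNReal.ofReal (r k) := by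
    intro k
    rw [← enorm_eq_nnnorm, ← ofReal_norm, Complex.norm_real, Real.norm_eq_abs,
      abs_of_nonneg (Real.rpow_nonneg (hr0 k) _),
      ENNReal.ofReal_rpow_of_nonneg (Real.rpow_nonneg (hr0 k) _) he.le,
      ← Real.rpow_mul (hr0 k), one_div, inv_mul_cancel₀ he.ne', Real.rpow_one]
  rw [lqNorm]
  have hz : ∀ k ∉ Finset.range M, ENNReal.ofReal (r k) = 0 := by
    intro k hk
    rw [hrz k (le_of_not_gt (fun h => hk (Finset.mem_range.2 h)))]
    exact ENNReal.ofReal_zero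
  have h1 : (∑' k, ((‖((r k ^ (1/e) : ℝ) : ℂ)‖₊ : ℝ≥0∞)) ^ e) = 1 := by
    rw [tsum_congr hterm, tsum_eq_sum hz,
      ← ENNReal.ofReal_sum_of_nonneg (fun k _ => hr0 k), hsum, ENNReal.ofReal_one]
  rw [h1, ENNReal.one_rpow]

lemma construct (m : ℕ) {p q : ℝ} (hpq : p.HolderConjugate q) (t s : ℕ → ℝ)
    (htpos : ∀ k, 0 < t k) (hspos : ∀ k, 0 < s k)
    (ε : ℕ → ℝ) (hεpos : ∀ k, k < m → 0 ≤ ε k)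
    (δ : ℝ) (hδ : 0 ≤ δ) (hδ1 : ∑ k ∈ Finset.range m, ε k / (t k * s k) + δ = 1) :
    ∃ x y : ℕ → ℂ, x ∈ WT p t ∧ y ∈ WT q s ∧
      (∀ k, x k * y k =
        if k < m then (ε k : ℂ) else if k = m then ((t m * s m * δ : ℝ) : ℂ) else 0) ∧
      scalarProd x y = ((∑ k ∈ Finset.range m, ε k + t m * s m * δ : ℝ) : ℂ) := by
  have hts : ∀ k, 0 < t k * s k := fun k => mul_pos (htpos k) (hspos k)
  set r : ℕ → ℝ := fun k => if k < m then ε k / (t k * s k) else if k = m then δ else 0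
    with hr_def
  have hr0 : ∀ k, 0 ≤ r k := by
    intro k; rw [hr_def]; dsimp only
    split
    · exact div_nonneg (hεpos k ‹_›) (hts k).le
    · split
      · exact hδ
      · exact le_refl 0
  have hrz : ∀ k, m + 1 ≤ k → r k = 0 := by
    intro k hk; rw [hr_def]; dsimp only
    rw [if_neg (by omega), if_neg (by omega)]
  have hrsum : ∑ k ∈ Finset.range (m+1), r k = 1 := by
    rw [Finset.sum_range_succ]
    rw [show r m = δ by rw [hr_def]; dsimp only; rw [if_neg (lt_irrefl m), if_pos rfl]]
    rw [Finset.sum_congr rfl (fun k hk => show r k = ε k / (t k * s k) by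
      rw [hr_def]; exact if_pos (Finset.mem_range.1 hk))]
    exact hδ1
  refine ⟨fun k => (t k : ℂ) * ((r k ^ (1/p) : ℝ) : ℂ),
    fun k => (s k : ℂ) * ((r k ^ (1/q) : ℝ) : ℂ), ?_, ?_, ?_, ?_⟩
  · exact ⟨_, fun k => rfl, lq_of_finite p hpq.pos r hr0 (m+1) hrz hrsum⟩
  · exact ⟨_, fun k => rfl, lq_of_finite q hpq.symm.pos r hr0 (m+1) hrz hrsum⟩
  · intro k
    have hprod : (t k : ℂ) * ((r k ^ (1/p) : ℝ) : ℂ) * ((s k : ℂ) * ((r k ^ (1/q) : ℝ) : ℂ))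
        = ((t k * s k * r k : ℝ) : ℂ) := by
      have h1 : r k ^ (1/p) * r k ^ (1/q) = r k := by
        rw [← Real.rpow_add' (hr0 k) (by
          rw [one_div, one_div, hpq.inv_add_inv_eq_one]; exact one_ne_zero)]
        rw [one_div, one_div, hpq.inv_add_inv_eq_one, Real.rpow_one]
      calc (t k : ℂ) * ((r k ^ (1/p) : ℝ) : ℂ) * ((s k : ℂ) * ((r k ^ (1/q) : ℝ) : ℂ))
          = ((t k * s k * (r k ^ (1/p) * r k ^ (1/q)) : ℝ) : ℂ) := by push_cast; ring
        _ = _ := by rw [h1]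
    rw [hprod, hr_def]; dsimp only
    split
    · rw [show t k * s k * (ε k / (t k * s k)) = ε k by
        rw [mul_comm (t k * s k) (ε k / (t k * s k)), div_mul_cancel₀ _ (hts k).ne']]
    · split
      · subst ‹k = m›; rfl
      · push_cast; rw [mul_zero]
  · rw [scalarProd]
    have hz : ∀ k ∉ Finset.range (m+1),
        (fun k => (t k : ℂ) * ((r k ^ (1/p) : ℝ) : ℂ) * ((s k : ℂ) * ((r k ^ (1/q) : ℝ) : ℂ))) k
          = 0 := by
      intro k hk
      have hk' : m + 1 ≤ k := le_of_not_gt (fun h => hk (Finset.mem_range.2 h))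
      have h0 : r k = 0 := hrz k hk'
      dsimp only
      rw [h0]
      rw [Real.zero_rpow (one_div_ne_zero hpq.pos.ne')]
      push_cast; ring
    rw [tsum_eq_sum hz]
    have hval : ∀ k, (t k : ℂ) * ((r k ^ (1/p) : ℝ) : ℂ) * ((s k : ℂ) * ((r k ^ (1/q) : ℝ) : ℂ))
        = ((t k * s k * r k : ℝ) : ℂ) := by
      intro k
      have h1 : r k ^ (1/p) * r k ^ (1/q) = r k := by
        rw [← Real.rpow_add' (hr0 k) (by
          rw [one_div, one_div, hpq.inv_add_inv_eq_one]; exact one_ne_zero)]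
        rw [one_div, one_div, hpq.inv_add_inv_eq_one, Real.rpow_one]
      calc (t k : ℂ) * ((r k ^ (1/p) : ℝ) : ℂ) * ((s k : ℂ) * ((r k ^ (1/q) : ℝ) : ℂ))
          = ((t k * s k * (r k ^ (1/p) * r k ^ (1/q)) : ℝ) : ℂ) := by push_cast; ring
        _ = _ := by rw [h1]
    rw [Finset.sum_congr rfl (fun k _ => hval k)]
    rw [Finset.sum_range_succ]
    rw [show r m = δ by rw [hr_def]; dsimp only; rw [if_neg (lt_irrefl m), if_pos rfl]]
    rw [Finset.sum_congr rfl (fun k hk => show ((t k * s k * r k : ℝ) : ℂ) = (ε k : ℂ) by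
      rw [hr_def]; dsimp only; rw [if_pos (Finset.mem_range.1 hk)]
      rw [show t k * s k * (ε k / (t k * s k)) = ε k by
        rw [mul_comm (t k * s k) (ε k / (t k * s k)), div_mul_cancel₀ _ (hts k).ne']])]
    push_cast
    ring

/-- Theorem 5.1: optimal recovery of the scalar product on
`W^{T,S}_{p,q} = W^T_p × W^S_q` from the first `n` coordinatewise products known with
coordinatewise errors `ε_k`. -/
theorem optimal_recovery_scalar_product_coordinatewise
    (n : ℕ) (hn : 1 ≤ n) (p q : ℝ) (hp : 1 < p) (hq : q = p / (p - 1))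
    (t s : ℕ → ℝ) (htpos : ∀ k, 0 < t k) (htmono : Antitone t)
    (hspos : ∀ k, 0 < s k) (hsmono : Antitone s)
    (ε : ℕ → ℝ) (hε : ∀ k, k < n → 0 ≤ ε k) (m : ℕ)
    (hm : (1 - ∑ k ∈ Finset.range n, ε k / (t k * s k) ≥ 0 ∧ m = n) ∨
      (m ≤ n ∧ 1 - ∑ k ∈ Finset.range m, ε k / (t k * s k) ≥ 0 ∧
        1 - ∑ k ∈ Finset.range m, ε k / (t k * s k) - ε m / (t m * s m) < 0)) :
    optErrSP (WT p t) (WT q s) (infoProdCoord n ε) =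
      recErrSP (WT p t) (WT q s) (infoProdCoord n ε) (PsiStar t s n m) ∧
    recErrSP (WT p t) (WT q s) (infoProdCoord n ε) (PsiStar t s n m) =
      ENNReal.ofReal
        (t m * s m + ∑ k ∈ Finset.range m, ε k * (1 - t m * s m / (t k * s k))) := by
  have hpq : p.HolderConjugate q := by rw [hq]; exact Real.HolderConjugate.conjExponent hp
  have hts : ∀ k, 0 < t k * s k := fun k => mul_pos (htpos k) (hspos k)
  have hc : 0 < t m * s m := hts m
  set δ : ℝ := 1 - ∑ k ∈ Finset.range m, ε k / (t k * s k) with hδdef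
  have hkey : m ≤ n ∧ 0 ≤ δ ∧ (m < n → t m * s m * δ ≤ ε m) := by
    rcases hm with ⟨h1, hm2⟩ | ⟨hmn, h2, h3⟩
    · refine ⟨le_of_eq hm2, ?_, ?_⟩
      · rw [hδdef, hm2]; exact h1
      · intro hlt; rw [hm2] at hlt; exact absurd hlt (lt_irrefl n)
    · refine ⟨hmn, h2, fun _ => ?_⟩
      have h4 : δ < ε m / (t m * s m) := by rw [hδdef]; linarith
      have h5 : δ * (t m * s m) < ε m := (lt_div_iff₀ hc).1 h4
      nlinarith
  obtain ⟨hmn, hδ0, hcm⟩ := hkey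
  have hε' : ∀ k, k < m → 0 ≤ ε k := fun k hk => hε k (lt_of_lt_of_le hk hmn)
  obtain ⟨x, y, hxW, hyW, hxyk, hxyS⟩ := construct m hpq t s htpos hspos ε hε' δ hδ0
    (by rw [hδdef]; ring)
  set V : ℝ := t m * s m + ∑ k ∈ Finset.range m, ε k * (1 - t m * s m / (t k * s k))
    with hVdef
  have hcoef : ∀ k, k < m → 0 ≤ 1 - t m * s m / (t k * s k) := by
    intro k hk
    rw [sub_nonneg, div_le_one (hts k)]
    exact mul_le_mul (htmono hk.le) (hsmono hk.le) (hspos m).le (htpos k).le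
  have hV0 : 0 ≤ V := by
    rw [hVdef]
    exact add_nonneg hc.le (Finset.sum_nonneg fun k hk =>
      mul_nonneg (hε' k (Finset.mem_range.1 hk)) (hcoef k (Finset.mem_range.1 hk)))
  have hVeq : (∑ k ∈ Finset.range m, ε k) + t m * s m * δ = V := by
    rw [hVdef, hδdef]
    rw [Finset.sum_congr rfl (fun k _ => show ε k * (1 - t m * s m / (t k * s k)) =
      ε k - t m * s m * (ε k / (t k * s k)) from by ring),
      Finset.sum_sub_distrib, ← Finset.mul_sum]
    ring
  have hA1 : scalarProd x y = (V : ℂ) := by rw [hxyS, hVeq]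
  have hA2 : scalarProd x (fun k => -y k) = -(V : ℂ) := by
    rw [show scalarProd x (fun k => -y k) = -scalarProd x y from ?_, hA1]
    rw [scalarProd, scalarProd, ← tsum_neg]
    exact tsum_congr fun k => by ring
  have hyW' : (fun k => -y k) ∈ WT q s := by
    obtain ⟨g, hg1, hg2⟩ := hyW
    refine ⟨fun k => -g k, fun k => by dsimp only; rw [hg1 k]; ring, ?_⟩
    have : lqNorm q (fun k => -g k) = lqNorm q g := by
      rw [lqNorm, lqNorm]
      exact congrArg (· ^ (1/q)) (tsum_congr fun k => by rw [nnnorm_neg])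
    rw [this]; exact hg2
  have hval : ∀ k : Fin n, ‖x (k : ℕ) * y (k : ℕ)‖ ≤ ε (k : ℕ) := by
    intro k
    rw [hxyk (k : ℕ)]
    rcases lt_trichotomy (k : ℕ) m with hlt | heq | hgt
    · rw [if_pos hlt, Complex.norm_real, Real.norm_eq_abs, abs_of_nonneg (hε' _ hlt)]
    · rw [if_neg (by omega), if_pos heq, Complex.norm_real, Real.norm_eq_abs,
        abs_of_nonneg (mul_nonneg hc.le hδ0), heq]
      exact hcm (heq ▸ k.isLt)
    · rw [if_neg (by omega), if_neg (by omega), norm_zero]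
      exact hε _ k.isLt
  have hinfo : ((0, 0) : (Fin n → ℂ) × (Fin n → ℂ)) ∈ infoProdCoord n ε x y := by
    intro k
    simpa using hval k
  have hinfo' : ((0, 0) : (Fin n → ℂ) × (Fin n → ℂ)) ∈
      infoProdCoord n ε x (fun k => -y k) := by
    intro k
    have : ‖x (k : ℕ) * -y (k : ℕ)‖ ≤ ε (k : ℕ) := by
      rw [show x (k : ℕ) * -y (k : ℕ) = -(x (k : ℕ) * y (k : ℕ)) from by ring, norm_neg]
      exact hval k
    simpa using this
  -- lower bound
  have hlow : ∀ Ψ : (Fin n → ℂ) × (Fin n → ℂ) → ℂ,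
      ENNReal.ofReal V ≤ recErrSP (WT p t) (WT q s) (infoProdCoord n ε) Ψ := by
    intro Ψ
    have hmem : ∀ {y' : ℕ → ℂ}, y' ∈ WT q s →
        ((0, 0) : (Fin n → ℂ) × (Fin n → ℂ)) ∈ infoProdCoord n ε x y' →
        (‖scalarProd x y' - Ψ (0, 0)‖₊ : ℝ≥0∞) ≤
          recErrSP (WT p t) (WT q s) (infoProdCoord n ε) Ψ := by
      intro y' hy' h0
      exact le_iSup₂_of_le x hxW (le_iSup₂_of_le y' hy' (le_iSup₂_of_le (0, 0) h0 le_rfl))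
    rcases le_or_gt V ‖scalarProd x y - Ψ (0, 0)‖ with hcase | hcase
    · refine le_trans ?_ (hmem hyW hinfo)
      rw [← enorm_eq_nnnorm, ← ofReal_norm]
      exact ENNReal.ofReal_le_ofReal hcase
    · have hsub : ‖scalarProd x y - scalarProd x (fun k => -y k)‖ = 2 * V := by
        rw [hA1, hA2, show (V : ℂ) - -(V : ℂ) = ((2 * V : ℝ) : ℂ) from by push_cast; ring,
          Complex.norm_real, Real.norm_eq_abs, abs_of_nonneg (by linarith)]
      have tri : ‖scalarProd x y - scalarProd x (fun k => -y k)‖ ≤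
          ‖scalarProd x y - Ψ (0, 0)‖ + ‖scalarProd x (fun k => -y k) - Ψ (0, 0)‖ := by
        calc ‖scalarProd x y - scalarProd x (fun k => -y k)‖
            = ‖(scalarProd x y - Ψ (0, 0)) - (scalarProd x (fun k => -y k) - Ψ (0, 0))‖ := by
              congr 1; ring
          _ ≤ _ := norm_sub_le _ _
      have h2 : V ≤ ‖scalarProd x (fun k => -y k) - Ψ (0, 0)‖ := by
        rw [hsub] at tri; linarith
      refine le_trans ?_ (hmem hyW' hinfo')
      rw [← enorm_eq_nnnorm, ← ofReal_norm]
      exact ENNReal.ofReal_le_ofReal h2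
  -- upper bound
  have hup : recErrSP (WT p t) (WT q s) (infoProdCoord n ε) (PsiStar t s n m) ≤
      ENNReal.ofReal V := by
    rw [recErrSP]
    refine iSup₂_le fun x' hx' => iSup₂_le fun y' hy' => iSup₂_le fun ab hab => ?_
    rw [← enorm_eq_nnnorm, ← ofReal_norm]
    exact ENNReal.ofReal_le_ofReal
      (upper_aux n m hmn hpq t s htpos htmono hspos hsmono ε hx' hy' hab)
  have h1 : recErrSP (WT p t) (WT q s) (infoProdCoord n ε) (PsiStar t s n m) =
      ENNReal.ofReal V := le_antisymm hup (hlow _)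
  have h2 : optErrSP (WT p t) (WT q s) (infoProdCoord n ε) = ENNReal.ofReal V :=
    le_antisymm ((iInf_le _ (PsiStar t s n m)).trans hup) (le_iInf hlow)
  exact ⟨h2.trans h1.symm, h1⟩
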